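/- Every finite composition of maps taken from {f₀, f₁} (equivalently, every element of the submonoid of self-maps of ℕ → Fin m generated by f₀ and f₁) is equal, as a self-map of ℕ → Fin m, to a normal-form transformation N(k; p_k, …, p₀) for some k ≥ 0 and some parameters p₀ ≥ 0, p_k ≥ 0, and p_i ≥ 1 for 1 ≤ i ≤ k-1. -/

import Mathlib

/- The automaton transformation `f₀` of the Mealy automaton `I_m` acting on
infinite words `u : ℕ → Fin m`: if `u` is constantly `m-1` it returns the
constant `0` sequence; otherwise, with `j` the least index where `u j ≠ m-1`,
it sets positions `≤ j` to `0` and keeps the rest. -/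
open Classical in
noncomputable def f0 (m : ℕ) (u : ℕ → Fin m) : ℕ → Fin m :=
  if h : ∃ j, (u j : ℕ) ≠ m - 1 then
    fun i => if i ≤ Nat.find h then ⟨0, (u 0).pos⟩ else u i
  else fun _ => ⟨0, (u 0).pos⟩

/- The automaton transformation `f₁` (the base-`m` odometer): if `u` is
constantly `m-1` it returns the constant `0` sequence; otherwise, with `j` the
least index where `u j ≠ m-1`, positions `< j` become `0`, position `j` is
incremented and the rest are kept. -/
open Classical in
noncomputable def f1 (m : ℕ) (u : ℕ → Fin m) : ℕ → Fin m :=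
  if h : ∃ j, (u j : ℕ) ≠ m - 1 then
    fun i =>
      if i < Nat.find h then ⟨0, (u 0).pos⟩
      else if hie : i = Nat.find h then
        ⟨(u i : ℕ) + 1, by
          have h2 := Nat.find_spec h
          rw [← hie] at h2
          have h3 := (u i).isLt
          have h4 := (u 0).pos
          omega⟩
      else u i
  else fun _ => ⟨0, (u 0).pos⟩

/- The inner part `B j = f₀ ∘ f₁^{m^j p_j - 1} ∘ ⋯ ∘ f₀ ∘ f₁^{m p₁ - 1} ∘ f₀ ∘ f₁^{p₀}`
of a normal form (with `B 0 = f₀ ∘ f₁^{p₀}`). -/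
section Aux
variable {m : ℕ}

def valv (u : ℕ → Fin m) (i : ℕ) : ℕ := ∑ j ∈ Finset.range i, (u j : ℕ) * m ^ j

lemma valv_succ (u : ℕ → Fin m) (i : ℕ) :
    valv u (i+1) = valv u i + (u i : ℕ) * m ^ i :=
  Finset.sum_range_succ _ _

lemma valv_lt (u : ℕ → Fin m) (i : ℕ) : valv u i < m ^ i := by
  induction i with
  | zero => simp [valv]
  | succ i ih =>
    have h1 : (u i : ℕ) * m ^ i ≤ (m-1) * m ^ i :=
      Nat.mul_le_mul_right _ (by have := (u i).isLt; omega)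
    have h2 : 0 < m ^ i := pow_pos (u 0).pos i
    have h3 : (m - 1) * m ^ i = m * m ^ i - m ^ i := by
      rw [Nat.sub_mul, Nat.one_mul]
    have h4 : m ^ i ≤ m * m ^ i := Nat.le_mul_of_pos_left _ (u 0).pos
    rw [valv_succ, pow_succ, Nat.mul_comm (m ^ i) m]
    omega

noncomputable def addN (q : ℕ) (u : ℕ → Fin m) : ℕ → Fin m :=
  fun i => ⟨(q + valv u (i+1)) / m ^ i % m, Nat.mod_lt _ (u 0).pos⟩

lemma addN_coe (q : ℕ) (u : ℕ → Fin m) (i : ℕ) :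
    (addN q u i : ℕ) = (q + valv u (i+1)) / m ^ i % m := rfl

lemma addN_zero (u : ℕ → Fin m) : addN 0 u = u := by
  funext i
  apply Fin.ext
  rw [addN_coe, Nat.zero_add, valv_succ, Nat.add_mul_div_right _ _ (pow_pos (u 0).pos i),
    Nat.div_eq_of_lt (valv_lt u i), Nat.zero_add, Nat.mod_eq_of_lt (u i).isLt]

lemma valv_addN (q : ℕ) (u : ℕ → Fin m) (i : ℕ) :
    valv (addN q u) i = (q + valv u i) % m ^ i := by
  induction i with
  | zero => simp [valv, Nat.mod_one]
  | succ i ih =>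
    rw [valv_succ, ih, addN_coe, pow_succ, Nat.mod_mul, valv_succ,
      ← Nat.add_assoc, Nat.add_mul_mod_self_right, Nat.mul_comm]

lemma addN_addN (a b : ℕ) (u : ℕ → Fin m) : addN a (addN b u) = addN (a+b) u := by
  funext i
  apply Fin.ext
  rw [addN_coe, addN_coe, valv_addN]
  set X := b + valv u (i+1) with hX
  have h2 : 0 < m ^ i := pow_pos (u 0).pos i
  have hd : a + X = a + X % m ^ (i+1) + m ^ i * (m * (X / m ^ (i+1))) := by
    have h6 := Nat.mod_add_div X (m ^ (i+1))
    have h5 : m ^ i * (m * (X / m ^ (i+1))) = m ^ (i+1) * (X / m ^ (i+1)) := by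
      rw [pow_succ]; ring
    omega
  have : a + b + valv u (i+1) = a + X := by omega
  rw [this, hd, Nat.add_mul_div_left _ _ h2, Nat.add_mul_mod_self_left]

lemma valv_max (u : ℕ → Fin m) (i : ℕ) (h : ∀ j < i, (u j : ℕ) = m - 1) :
    valv u i = m ^ i - 1 := by
  induction i with
  | zero => simp [valv]
  | succ i ih =>
    have h2 : 0 < m ^ i := pow_pos (u 0).pos i
    have h3 : m ^ i ≤ m * m ^ i := Nat.le_mul_of_pos_left _ (u 0).pos
    rw [valv_succ, ih (fun j hj => h j (by omega)), h i (by omega), Nat.sub_mul,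
      Nat.one_mul, pow_succ, Nat.mul_comm (m ^ i) m]
    omega

lemma valv_lt' (u : ℕ → Fin m) (J i : ℕ) (hJ : J < i) (hne : (u J : ℕ) ≠ m - 1) :
    valv u i + 1 < m ^ i := by
  induction i with
  | zero => omega
  | succ i ih =>
    have h2 : 0 < m ^ i := pow_pos (u 0).pos i
    have h3 : m ^ i ≤ m * m ^ i := Nat.le_mul_of_pos_left _ (u 0).pos
    have hui : (u i : ℕ) * m ^ i ≤ (m-1) * m ^ i :=
      Nat.mul_le_mul_right _ (by have := (u i).isLt; omega)
    have hsub : (m - 1) * m ^ i = m * m ^ i - m ^ i := by rw [Nat.sub_mul, Nat.one_mul]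
    rw [valv_succ, pow_succ, Nat.mul_comm (m ^ i) m]
    rcases Nat.lt_or_ge J i with hJi | hJi
    · have := ih hJi
      omega
    · -- J = i
      have hJe : J = i := by omega
      subst hJe
      have hv := valv_lt u J
      have hm1 : 1 ≤ m - 1 := by have := (u J).pos; have := (u J).isLt; omega
      have hui2 : (u J : ℕ) * m ^ J ≤ (m-2) * m ^ J :=
        Nat.mul_le_mul_right _ (by have := (u J).isLt; omega)
      have hsub2 : (m - 2) * m ^ J = m * m ^ J - 2 * m ^ J := by
        rw [Nat.sub_mul]
      have h3' : 2 * m ^ J ≤ m * m ^ J := Nat.mul_le_mul_right _ (by omega)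
      omega

lemma f1_addN (hm : 2 ≤ m) (u : ℕ → Fin m) : f1 m u = addN 1 u := by
  by_cases h : ∃ j, (u j : ℕ) ≠ m - 1
  · have hJspec : (u (Nat.find h) : ℕ) ≠ m - 1 := Nat.find_spec h
    have hlow : ∀ i < Nat.find h, (u i : ℕ) = m - 1 := fun i hi => not_not.mp (Nat.find_min h hi)
    funext i
    rw [f1, dif_pos h]
    have h2 : 0 < m ^ i := pow_pos (u 0).pos i
    by_cases h1 : i < Nat.find h
    · rw [if_pos h1]
      apply Fin.ext
      show (0 : ℕ) = (1 + valv u (i+1)) / m ^ i % m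
      rw [valv_max u (i+1) (fun j hj => hlow j (by omega))]
      have h3 : 0 < m ^ (i+1) := pow_pos (u 0).pos _
      rw [show 1 + (m ^ (i+1) - 1) = m ^ (i+1) by omega, pow_succ,
        Nat.mul_div_cancel_left _ h2, Nat.mod_self]
    · by_cases h2' : i = Nat.find h
      · rw [if_neg h1, dif_pos h2']
        apply Fin.ext
        show (u i : ℕ) + 1 = (1 + valv u (i+1)) / m ^ i % m
        rw [valv_succ, valv_max u i (fun j hj => hlow j (h2' ▸ hj))]
        have hui : (u i : ℕ) ≠ m - 1 := h2' ▸ hJspec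
        have hui2 : (u i : ℕ) + 1 < m := by have := (u i).isLt; omega
        rw [show 1 + (m ^ i - 1 + (u i : ℕ) * m ^ i) = m ^ i * (1 + (u i : ℕ)) by
            have : m ^ i * (1 + (u i : ℕ)) = m ^ i + (u i : ℕ) * m ^ i := by ring
            omega,
          Nat.mul_div_cancel_left _ h2, Nat.mod_eq_of_lt (by omega)]
        omega
      · rw [if_neg h1, dif_neg h2']
        apply Fin.ext
        show (u i : ℕ) = (1 + valv u (i+1)) / m ^ i % m
        have hJi : Nat.find h < i := by omega
        have hlt := valv_lt' u (Nat.find h) i hJi hJspec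
        rw [valv_succ, ← Nat.add_assoc, Nat.add_mul_div_right _ _ h2,
          Nat.div_eq_of_lt (by omega), Nat.zero_add, Nat.mod_eq_of_lt (u i).isLt]
  · funext i
    rw [f1, dif_neg h]
    push_neg at h
    apply Fin.ext
    show (0 : ℕ) = (1 + valv u (i+1)) / m ^ i % m
    have h2 : 0 < m ^ i := pow_pos (u 0).pos i
    have h3 : 0 < m ^ (i+1) := pow_pos (u 0).pos _
    rw [valv_max u (i+1) (fun j _ => h j), show 1 + (m ^ (i+1) - 1) = m ^ (i+1) by omega,
      pow_succ, Nat.mul_div_cancel_left _ h2, Nat.mod_self]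

lemma f1_iter (hm : 2 ≤ m) (q : ℕ) (u : ℕ → Fin m) : (f1 m)^[q] u = addN q u := by
  induction q with
  | zero => rw [Function.iterate_zero, id, addN_zero]
  | succ q ih =>
    rw [Function.iterate_succ_apply', ih, f1_addN hm, addN_addN, Nat.add_comm]

lemma valv_zero {j : ℕ} (w : ℕ → Fin m) (hw : ∀ i' ≤ j, (w i' : ℕ) = 0) {i : ℕ}
    (hi : i ≤ j + 1) : valv w i = 0 := by
  apply Finset.sum_eq_zero
  intro x hx
  rw [Finset.mem_range] at hx
  rw [hw x (by omega), Nat.zero_mul]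

lemma valv_dvd {j : ℕ} {w : ℕ → Fin m} (hw : ∀ i' ≤ j, (w i' : ℕ) = 0) (i : ℕ) :
    m ^ (j+1) ∣ valv w i := by
  induction i with
  | zero => simp [valv]
  | succ i ih =>
    rw [valv_succ]
    refine dvd_add ih ?_
    rcases le_or_gt i j with hij | hij
    · rw [hw i hij, Nat.zero_mul]; exact dvd_zero _
    · exact Dvd.dvd.mul_left (pow_dvd_pow m (by omega)) _
lemma digit_pred (hm0 : 0 < m) {E i : ℕ} (hdvd : m ^ (i+1) ∣ E) (hE : 1 ≤ E) :
    (E - 1) / m ^ i % m = m - 1 := by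
  obtain ⟨s, hs⟩ := hdvd
  have h2 : 0 < m ^ i := pow_pos hm0 i
  have hs1 : 1 ≤ s := by
    rcases Nat.eq_zero_or_pos s with h | h
    · rw [h, Nat.mul_zero] at hs; omega
    · exact h
  obtain ⟨s', rfl⟩ : ∃ s', s = s' + 1 := ⟨s - 1, by omega⟩
  have key : E - 1 = m ^ i * (m * s' + (m - 1)) + (m ^ i - 1) := by
    have h3 : m ^ i * (m * s' + (m - 1)) = m ^ i * m * s' + m ^ i * (m-1) := by ring
    have h4 : m ^ i * (m - 1) = m ^ i * m - m ^ i := by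
      rw [Nat.mul_sub, Nat.mul_one]
    have h5 : m ^ i ≤ m ^ i * m := Nat.le_mul_of_pos_right _ hm0
    have h6 : E = m ^ i * m * s' + m ^ i * m := by rw [hs, pow_succ]; ring
    omega
  rw [key, Nat.mul_add_div h2, Nat.div_eq_of_lt (by omega), Nat.add_zero,
    Nat.mul_add_mod, Nat.mod_eq_of_lt (by omega)]

lemma div_pred {c t : ℕ} (hc : 0 < c) (ht : 1 ≤ t) : (c * t - 1) / c = t - 1 := by
  obtain ⟨t', rfl⟩ : ∃ t', t = t' + 1 := ⟨t - 1, by omega⟩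
  have h1 : c * (t' + 1) - 1 = c * t' + (c - 1) := by
    have : c * (t' + 1) = c * t' + c := by ring
    omega
  rw [h1, Nat.mul_add_div hc, Nat.div_eq_of_lt (by omega), Nat.add_zero]
  omega

lemma div_shift (hm0 : 0 < m) {v i A b : ℕ} (hvi : v + 1 ≤ i) (hA : m ^ (v+1) ∣ A)
    (hb : b < m ^ (v+1)) : (A + b) / m ^ i = A / m ^ i := by
  obtain ⟨kk, hk⟩ := hA
  have h1 : m ^ i = m ^ (v+1) * m ^ (i - (v+1)) := by
    rw [← pow_add]; congr 1; omega
  have h2 : 0 < m ^ (v+1) := pow_pos hm0 _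
  rw [h1, ← Nat.div_div_eq_div_mul, ← Nat.div_div_eq_div_mul, hk,
    Nat.mul_add_div h2, Nat.div_eq_of_lt hb, Nat.add_zero, Nat.mul_div_cancel_left _ h2]

lemma key_lemma (hm : 2 ≤ m) (j q : ℕ) (hq : ¬ m ^ (j+1) ∣ (q+1)) :
    ∃ q', ∀ w : ℕ → Fin m, (∀ i ≤ j, (w i : ℕ) = 0) → f0 m (addN q w) = addN q' w := by
  have hm0 : 0 < m := by omega
  have hv : ∃ i, ¬ m ^ (i+1) ∣ (q+1) := ⟨j, hq⟩
  have hvj : Nat.find hv ≤ j := Nat.find_min' hv hq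
  set v := Nat.find hv with hvdef
  have hvspec : ¬ m ^ (v+1) ∣ (q+1) := Nat.find_spec hv
  have hvd : m ^ v ∣ q + 1 := by
    rcases Nat.eq_zero_or_pos v with h0 | h0
    · rw [h0]; exact one_dvd _
    · have h1 := Nat.find_min hv (m := v - 1) (by omega)
      rw [not_not] at h1
      have h2 : v - 1 + 1 = v := by omega
      rwa [h2] at h1
  set t := (q+1) / m ^ v with htdef
  have ht : q + 1 = m ^ v * t := (Nat.mul_div_cancel' hvd).symm
  have htm : ¬ m ∣ t := fun hdvd => hvspec (by
    rw [pow_succ, ht]; exact Nat.mul_dvd_mul_left _ hdvd)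
  have ht1 : 1 ≤ t := by
    rcases Nat.eq_zero_or_pos t with h | h
    · rw [h, Nat.mul_zero] at ht; omega
    · exact h
  set d := t % m with hddef
  have hd1 : 1 ≤ d := by
    rcases Nat.eq_zero_or_pos d with h | h
    · exact absurd (Nat.dvd_of_mod_eq_zero h) htm
    · exact h
  have hdm : d < m := Nat.mod_lt _ hm0
  refine ⟨m ^ (v+1) * (t / m), fun w hw => ?_⟩
  set q' := m ^ (v+1) * (t / m) with hq'def
  have hdmv1 : 1 ≤ d * m ^ v := Nat.one_le_iff_ne_zero.mpr (by positivity)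
  have hq'1 : q' + d * m ^ v = q + 1 := by
    have h1 : m ^ (v+1) * (t / m) + (t % m) * m ^ v = m ^ v * (m * (t / m) + t % m) := by
      rw [pow_succ]; ring
    rw [hq'def, hddef, h1, Nat.div_add_mod]
    omega
  set u := addN q w with hudef
  have hdig : ∀ i, i ≤ j → (u i : ℕ) = q / m ^ i % m := by
    intro i hi
    rw [hudef, addN_coe, valv_zero w hw (by omega), Nat.add_zero]
  have hlow : ∀ i, i < v → (u i : ℕ) = m - 1 := by
    intro i hi
    have h1 : m ^ (i+1) ∣ q + 1 := not_not.mp (Nat.find_min hv hi)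
    rw [hdig i (by omega)]
    have h2 := digit_pred hm0 h1 (by omega)
    simpa using h2
  have hatv : (u v : ℕ) = d - 1 := by
    rw [hdig v hvj]
    have h1 : q = m ^ v * t - 1 := by omega
    rw [h1, div_pred (pow_pos hm0 v) ht1]
    have h2 : t - 1 = m * (t / m) + (d - 1) := by
      have := Nat.div_add_mod t m
      omega
    rw [h2, Nat.mul_add_mod, Nat.mod_eq_of_lt (by omega)]
  have hne : (u v : ℕ) ≠ m - 1 := by rw [hatv]; omega
  have hex : ∃ i, (u i : ℕ) ≠ m - 1 := ⟨v, hne⟩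
  have hfind : Nat.find hex = v := by
    rw [Nat.find_eq_iff]
    exact ⟨hne, fun i hi => not_not.mpr (hlow i hi)⟩
  funext i
  rw [f0, dif_pos hex, hfind]
  by_cases hiv : i ≤ v
  · rw [if_pos hiv]
    apply Fin.ext
    show (0 : ℕ) = (q' + valv w (i+1)) / m ^ i % m
    rw [valv_zero w hw (by omega), Nat.add_zero]
    obtain ⟨c, hc⟩ : m ^ i * m ∣ q' := by
      rw [← pow_succ]
      exact Dvd.dvd.mul_right (pow_dvd_pow m (by omega)) _
    rw [hc, Nat.mul_assoc, Nat.mul_div_cancel_left _ (pow_pos hm0 i), Nat.mul_mod_right]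
  · rw [if_neg hiv]
    apply Fin.ext
    show (q + valv w (i+1)) / m ^ i % m = (q' + valv w (i+1)) / m ^ i % m
    set Y := valv w (i+1) with hY
    have hYd : m ^ (v+1) ∣ Y := dvd_trans (pow_dvd_pow m (by omega)) (valv_dvd hw (i+1))
    have hq'd : m ^ (v+1) ∣ q' := Dvd.intro _ rfl
    have h1 : q + Y = (q' + Y) + (d * m ^ v - 1) := by omega
    have hb : d * m ^ v - 1 < m ^ (v+1) := by
      have h2 : d * m ^ v ≤ (m-1) * m ^ v := Nat.mul_le_mul_right _ (by omega)
      have h3 : (m-1) * m ^ v < m * m ^ v := (Nat.mul_lt_mul_right (pow_pos hm0 v)).mpr (by omega)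
      have h4 : m ^ (v+1) = m * m ^ v := by rw [pow_succ]; ring
      omega
    rw [h1, div_shift hm0 (by omega) (dvd_add hq'd hYd) hb]

end Aux

noncomputable def nfB (m : ℕ) (p : ℕ → ℕ) : ℕ → (ℕ → Fin m) → ℕ → Fin m
  | 0 => f0 m ∘ (f1 m)^[p 0]
  | j + 1 => f0 m ∘ (f1 m)^[m ^ (j + 1) * p (j + 1) - 1] ∘ nfB m p j

/- The normal-form transformation
`N(k; p_k, …, p₀) = f₁^{p_k} ∘ f₀ ∘ f₁^{m^{k-1} p_{k-1} - 1} ∘ ⋯ ∘ f₀ ∘ f₁^{m p₁ - 1} ∘ f₀ ∘ f₁^{p₀}`,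
with `N(0; p₀) = f₁^{p₀}`. -/
noncomputable def nf (m : ℕ) (k : ℕ) (p : ℕ → ℕ) : (ℕ → Fin m) → ℕ → Fin m :=
  match k with
  | 0 => (f1 m)^[p 0]
  | k' + 1 => (f1 m)^[p (k' + 1)] ∘ nfB m p k'

lemma f0_zero_of {m : ℕ} (u : ℕ → Fin m) (c : ℕ) (h : ∀ i < c, (u i : ℕ) = m - 1) :
    ∀ i ≤ c, (f0 m u i : ℕ) = 0 := by
  intro i hi
  rw [f0]
  split
  · next hex =>
    have hc : c ≤ Nat.find hex := by
      by_contra hlt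
      push_neg at hlt
      exact (Nat.find_spec hex) (h _ hlt)
    simp only [if_pos (le_trans hi hc)]
  · rfl

lemma nfB_congr {m j : ℕ} {p p' : ℕ → ℕ} (h : ∀ i ≤ j, p i = p' i) :
    nfB m p j = nfB m p' j := by
  induction j with
  | zero => simp only [nfB, h 0 (le_refl 0)]
  | succ j ih =>
    simp only [nfB, h (j+1) le_rfl, ih (fun i hi => h i (by omega))]

lemma nfB_zero {m : ℕ} (hm : 2 ≤ m) (p : ℕ → ℕ) (j : ℕ)
    (hp : ∀ i, 1 ≤ i → i ≤ j → 1 ≤ p i) :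
    ∀ u, ∀ i ≤ j, ((nfB m p j u) i : ℕ) = 0 := by
  induction j with
  | zero =>
    intro u i hi
    exact f0_zero_of _ 0 (fun i' hi' => absurd hi' (Nat.not_lt_zero i')) i hi
  | succ j ih =>
    intro u i hi
    have e1 : nfB m p (j+1) u
        = f0 m ((f1 m)^[m ^ (j+1) * p (j+1) - 1] (nfB m p j u)) := rfl
    set w := nfB m p j u with hwdef
    have hw : ∀ i' ≤ j, (w i' : ℕ) = 0 :=
      fun i' hi' => ih (fun i'' h1 h2 => hp i'' h1 (by omega)) u i' hi'
    set e := m ^ (j+1) * p (j+1) - 1 with hedef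
    have hE : e + 1 = m ^ (j+1) * p (j+1) := by
      have h1 : 0 < m ^ (j+1) * p (j+1) :=
        Nat.mul_pos (pow_pos (by omega) _) (hp (j+1) (by omega) le_rfl)
      omega
    rw [e1, f1_iter hm]
    refine f0_zero_of _ (j+1) ?_ i hi
    intro i' hi'
    rw [addN_coe]
    have hr : e + valv w (i'+1) + 1 = (e+1) + valv w (i'+1) := by omega
    have hdvd : m ^ (i'+1) ∣ e + valv w (i'+1) + 1 := by
      rw [hr]
      refine dvd_trans (pow_dvd_pow m (by omega)) (dvd_add ?_ (valv_dvd hw (i'+1)))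
      rw [hE]
      exact Dvd.intro _ rfl
    have h2 := digit_pred (show 0 < m by omega) hdvd (by omega)
    simpa using h2

/-- Every element of the submonoid of self-maps of `ℕ → Fin m` generated by
`f₀` and `f₁` equals a normal-form transformation `N(k; p_k, …, p₀)` with
`p_i ≥ 1` for `1 ≤ i ≤ k-1`. -/
theorem exists_normal_form (m : ℕ) (hm : 2 ≤ m)
    (s : Function.End (ℕ → Fin m))
    (hs : s ∈ Submonoid.closure ({f0 m, f1 m} : Set (Function.End (ℕ → Fin m)))) :
    ∃ (k : ℕ) (p : ℕ → ℕ), (∀ i, 1 ≤ i → i ≤ k - 1 → 1 ≤ p i) ∧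
      (s : (ℕ → Fin m) → ℕ → Fin m) = nf m k p := by
  induction hs using Submonoid.closure_induction_left with
  | one =>
    refine ⟨0, fun _ => 0, by omega, ?_⟩
    show (1 : Function.End (ℕ → Fin m)) = nf m 0 (fun _ => 0)
    simp only [nf, Function.iterate_zero]
    rfl
  | mul_left x hx y hy ih =>
    obtain ⟨k, p, hp, hy'⟩ := ih
    replace hx : x = f0 m ∨ x = f1 m := hx
    rcases hx with rfl | rfl
    · -- x = f0 m
      rcases k with _ | k'
      · refine ⟨1, fun i => if i = 0 then p 0 else 0, by omega, ?_⟩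
        show f0 m ∘ (y : (ℕ → Fin m) → ℕ → Fin m) = _
        rw [hy']
        show f0 m ∘ (f1 m)^[p 0]
          = (f1 m)^[(fun i => if i = 0 then p 0 else 0) 1]
            ∘ nfB m (fun i => if i = 0 then p 0 else 0) 0
        simp only [nfB, if_pos rfl]
        norm_num
      · set q := p (k'+1) with hqdef
        by_cases hdvd : m ^ (k'+1) ∣ q + 1
        · set p' : ℕ → ℕ := fun i =>
            if i = k'+1 then (q+1) / m ^ (k'+1) else if i = k'+2 then 0 else p i with hp'def
          refine ⟨k'+2, p', ?_, ?_⟩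
          · intro i h1 h2
            by_cases hik : i = k'+1
            · have h3 : 0 < (q+1) / m ^ (k'+1) :=
                Nat.div_pos (Nat.le_of_dvd (by omega) hdvd) (pow_pos (by omega) _)
              simp only [hp'def, if_pos hik]
              omega
            · have h4 : i ≤ k' := by omega
              simp only [hp'def, if_neg hik, if_neg (show i ≠ k'+2 by omega)]
              exact hp i h1 (by omega)
          · show f0 m ∘ (y : (ℕ → Fin m) → ℕ → Fin m) = _
            rw [hy']
            have e1 : m ^ (k'+1) * p' (k'+1) - 1 = q := by
              simp only [hp'def, if_pos rfl]
              rw [Nat.mul_div_cancel' hdvd]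
              omega
            have e2 : nfB m p' k' = nfB m p k' := by
              refine nfB_congr (fun i hi => ?_)
              simp only [hp'def, if_neg (show i ≠ k'+1 by omega),
                if_neg (show i ≠ k'+2 by omega)]
            show f0 m ∘ ((f1 m)^[p (k'+1)] ∘ nfB m p k')
              = (f1 m)^[p' (k'+2)] ∘ nfB m p' (k'+1)
            have e3 : p' (k'+2) = 0 := by
              simp only [hp'def, if_neg (show k'+2 ≠ k'+1 by omega), eq_self_iff_true,
                if_true]
            rw [e3]
            show f0 m ∘ ((f1 m)^[q] ∘ nfB m p k')
              = (f1 m)^[0] ∘ (f0 m ∘ (f1 m)^[m ^ (k'+1) * p' (k'+1) - 1] ∘ nfB m p' k')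
            rw [e1, e2, Function.iterate_zero]
            rfl
        · obtain ⟨q', hq'⟩ := key_lemma hm k' q hdvd
          refine ⟨k'+1, Function.update p (k'+1) q', ?_, ?_⟩
          · intro i h1 h2
            rw [Function.update_of_ne (by omega)]
            exact hp i h1 h2
          · show f0 m ∘ (y : (ℕ → Fin m) → ℕ → Fin m) = _
            rw [hy']
            have e2 : nfB m (Function.update p (k'+1) q') k' = nfB m p k' :=
              nfB_congr (fun i hi => Function.update_of_ne (by omega) _ _)
            show f0 m ∘ ((f1 m)^[p (k'+1)] ∘ nfB m p k')
              = (f1 m)^[Function.update p (k'+1) q' (k'+1)]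
                ∘ nfB m (Function.update p (k'+1) q') k'
            rw [e2, Function.update_self]
            funext u
            simp only [Function.comp_apply]
            rw [f1_iter hm, f1_iter hm]
            exact hq' (nfB m p k' u)
              (fun i h1 => nfB_zero hm p k' (fun i' ha hb => hp i' ha hb) u i h1)
    · -- x = f1 m
      refine ⟨k, Function.update p k (p k + 1), ?_, ?_⟩
      · intro i h1 h2
        rw [Function.update_of_ne (by omega)]
        exact hp i h1 h2
      · show f1 m ∘ (y : (ℕ → Fin m) → ℕ → Fin m) = _
        rw [hy']
        rcases k with _ | k'
        · show f1 m ∘ (f1 m)^[p 0] = (f1 m)^[Function.update p 0 (p 0 + 1) 0]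
          rw [Function.update_self, Function.iterate_succ']
        · have e2 : nfB m (Function.update p (k'+1) (p (k'+1) + 1)) k' = nfB m p k' :=
            nfB_congr (fun i hi => Function.update_of_ne (by omega) _ _)
          show f1 m ∘ ((f1 m)^[p (k'+1)] ∘ nfB m p k')
            = (f1 m)^[Function.update p (k'+1) (p (k'+1) + 1) (k'+1)]
              ∘ nfB m (Function.update p (k'+1) (p (k'+1) + 1)) k'
          rw [e2, Function.update_self, Function.iterate_succ', Function.comp_assoc]
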